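/- Let q > 1 be a real number and x > 0. Define the sequence (a_i) of nonnegative integers recursively: if a_k has been defined for all k < n, let a_n be the largest nonnegative integer satisfying a_1/q + ... + a_n/q^n < x. Then (a_i) has infinitely many nonzero terms, Σ_{i≥1} a_i q^{−i} = x, and furthermore a_n < q for all n ≥ 2. -/
import Mathlib

open Filter Topology

noncomputable def qgDigitU (q x s : ℝ) (n : ℕ) : ℕ :=
  sSup {m : ℕ | s + (m : ℝ) / q ^ (n + 1) < x}

noncomputable def qgSumU (q x : ℝ) : ℕ → ℝ
  | 0 => 0
  | n + 1 => qgSumU q x n + (qgDigitU q x (qgSumU q x n) n : ℝ) / q ^ (n + 1)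

lemma qgDigitU_spec {q x : ℝ} (hq : 1 < q) {s : ℝ} (n : ℕ) (hs : s < x) :
    s + (qgDigitU q x s n : ℝ) / q ^ (n + 1) < x ∧
    x ≤ s + ((qgDigitU q x s n : ℝ) + 1) / q ^ (n + 1) := by
  have hqp : (0:ℝ) < q ^ (n+1) := pow_pos (lt_trans one_pos hq) _
  set S := {m : ℕ | s + (m : ℝ) / q ^ (n + 1) < x} with hS
  have hne : 0 ∈ S := by simpa [hS] using hs
  have hbdd : BddAbove S := by
    refine ⟨⌈(x - s) * q ^ (n+1)⌉₊, fun m hm => ?_⟩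
    have hm' : s + (m : ℝ) / q ^ (n + 1) < x := hm
    have h1 : (m:ℝ) < (x - s) * q ^ (n+1) :=
      (div_lt_iff₀ hqp).mp (by linarith : (m:ℝ)/q^(n+1) < x - s)
    exact le_of_lt (Nat.lt_ceil.mpr h1)
  have hmem : qgDigitU q x s n ∈ S := Nat.sSup_mem ⟨0, hne⟩ hbdd
  constructor
  · exact hmem
  · by_contra h
    push_neg at h
    have : qgDigitU q x s n + 1 ∈ S := by
      show s + ((qgDigitU q x s n + 1 : ℕ) : ℝ) / q ^ (n + 1) < x
      push_cast
      exact h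
    have := le_csSup hbdd this
    simp [qgDigitU, hS] at this

lemma qgSumU_lt {q x : ℝ} (hq : 1 < q) (hx : 0 < x) : ∀ n, qgSumU q x n < x := by
  intro n
  induction n with
  | zero => simpa [qgSumU] using hx
  | succ n ih => exact (qgDigitU_spec hq n ih).1

lemma qgSumU_ge {q x : ℝ} (hq : 1 < q) (hx : 0 < x) (n : ℕ) :
    x ≤ qgSumU q x (n + 1) + 1 / q ^ (n + 1) := by
  have h := (qgDigitU_spec hq n (qgSumU_lt hq hx n)).2
  have : qgSumU q x (n+1) = qgSumU q x n + (qgDigitU q x (qgSumU q x n) n : ℝ) / q ^ (n + 1) := rfl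
  rw [this]
  rw [add_div] at h
  linarith

noncomputable def quasiGreedyU (q x : ℝ) (n : ℕ) : ℕ :=
  qgDigitU q x (qgSumU q x n) n

lemma qgSumU_eq_sum (q x : ℝ) (n : ℕ) :
    qgSumU q x n = ∑ i ∈ Finset.range n, (quasiGreedyU q x i : ℝ) / q ^ (i + 1) := by
  induction n with
  | zero => simp [qgSumU]
  | succ n ih => rw [Finset.sum_range_succ, ← ih]; rfl

lemma qgSumU_tendsto {q x : ℝ} (hq : 1 < q) (hx : 0 < x) :
    Tendsto (qgSumU q x) atTop (𝓝 x) := by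
  have hq0 : (0:ℝ) < q := lt_trans one_pos hq
  have h1 : Tendsto (fun n : ℕ => 1 / q ^ (n+1)) atTop (𝓝 0) := by
    have := tendsto_pow_atTop_nhds_zero_of_lt_one (le_of_lt (by positivity : (0:ℝ) < 1/q))
      (by rw [div_lt_one hq0]; exact hq)
    simp only [div_pow, one_pow] at this
    exact (this.comp (tendsto_add_atTop_nat 1))
  have hsq : Tendsto (fun n : ℕ => qgSumU q x (n+1)) atTop (𝓝 x) := by
    have hlow : Tendsto (fun n : ℕ => x - 1 / q ^ (n+1)) atTop (𝓝 x) := by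
      simpa using tendsto_const_nhds.sub h1
    refine tendsto_of_tendsto_of_tendsto_of_le_of_le hlow tendsto_const_nhds
      (fun n => by linarith [qgSumU_ge hq hx n]) (fun n => le_of_lt (qgSumU_lt hq hx (n+1)))
  exact (tendsto_add_atTop_iff_nat 1).mp hsq

/-- Proposition 2.4: for `q > 1` and `x > 0`, the quasi-greedy sequence with unbounded
digits is an infinite expansion of `x`, and moreover `a_n < q` for all `n ≥ 2`. -/
theorem quasiGreedyU_infinite_expansion (q x : ℝ) (hq : 1 < q) (hx : 0 < x) :
    {n | quasiGreedyU q x n ≠ 0}.Infinite ∧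
    (∑' i, (quasiGreedyU q x i : ℝ) / q ^ (i + 1) = x) ∧
    ∀ n, 1 ≤ n → (quasiGreedyU q x n : ℝ) < q := by
  have hq0 : (0:ℝ) < q := lt_trans one_pos hq
  have htend := qgSumU_tendsto hq hx
  refine ⟨?_, ?_, ?_⟩
  · by_contra h
    rw [Set.not_infinite] at h
    obtain ⟨N, hN⟩ := h.bddAbove
    have hconst : ∀ k, qgSumU q x (N + 1 + k) = qgSumU q x (N + 1) := by
      intro k
      induction k with
      | zero => rfl
      | succ k ih =>
        have hz : quasiGreedyU q x (N + 1 + k) = 0 := by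
          by_contra hz
          have : N + 1 + k ≤ N := hN hz
          omega
        show qgSumU q x (N+1+k) + (quasiGreedyU q x (N+1+k) : ℝ) / q ^ (N+1+k+1) = _
        rw [hz, ih]; simp
    have : Tendsto (fun k => qgSumU q x (N + 1 + k)) atTop (𝓝 x) :=
      htend.comp (tendsto_add_atTop_nat (N + 1)) |>.congr (fun k => by simp [Nat.add_comm])
    have hx' : x = qgSumU q x (N + 1) := by
      have hc : Tendsto (fun k : ℕ => qgSumU q x (N + 1 + k)) atTop (𝓝 (qgSumU q x (N+1))) := by
        simp only [hconst]; exact tendsto_const_nhds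
      exact tendsto_nhds_unique this hc
    exact absurd (qgSumU_lt hq hx (N+1)) (by rw [← hx']; exact lt_irrefl x)
  · have hnonneg : ∀ i, 0 ≤ (quasiGreedyU q x i : ℝ) / q ^ (i + 1) := fun i => by positivity
    have := (hasSum_iff_tendsto_nat_of_nonneg hnonneg x).mpr
      (by simpa only [← qgSumU_eq_sum] using htend)
    exact this.tsum_eq
  · rintro n hn
    obtain ⟨m, rfl⟩ : ∃ m, n = m + 1 := ⟨n - 1, by omega⟩
    have h1 : x ≤ qgSumU q x (m + 1) + 1 / q ^ (m + 1) := qgSumU_ge hq hx m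
    have h2 : qgSumU q x (m+1) + (quasiGreedyU q x (m+1) : ℝ) / q ^ (m + 2) < x :=
      (qgDigitU_spec hq (m+1) (qgSumU_lt hq hx (m+1))).1
    have hkey : (quasiGreedyU q x (m+1) : ℝ) / q ^ (m + 2) < q / q ^ (m+2) := by
      have heq : (1:ℝ) / q ^ (m+1) = q / q ^ (m+2) := by
        have hne : q ^ (m+1) ≠ 0 := ne_of_gt (pow_pos hq0 _)
        rw [pow_succ, eq_div_iff (by positivity)]
        field_simp
        ring
      calc (quasiGreedyU q x (m+1) : ℝ) / q ^ (m + 2) < 1 / q ^ (m+1) := by linarith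
        _ = q / q ^ (m+2) := heq
    exact (div_lt_div_iff_of_pos_right (pow_pos hq0 (m+2))).mp hkey
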